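/- arXiv:1903.06762 — 2 statements merged into one kernel-verified Lean document; each statement's English description precedes it below -/
import Mathlib

section
/- Fix β ∈ (0,1), N ∈ ℕ, and k ∈ {0, …, N−1}. The polynomial equation in t: (β/(N+1)) · Σ_{l=k}^{N} C(l,k) t^{l−k} − C(N,k) t^{N−k} = 0 has exactly one solution in the open interval (0,1). -/
theorem scenario_polynomial_unique_root (β : ℝ) (hβ : β ∈ Set.Ioo (0 : ℝ) 1)
    (N k : ℕ) (hk : k < N) :
    ∃! t : ℝ, t ∈ Set.Ioo (0 : ℝ) 1 ∧
      (β / (N + 1)) * ∑ l ∈ Finset.Icc k N, (l.choose k : ℝ) * t ^ (l - k)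
        - (N.choose k : ℝ) * t ^ (N - k) = 0 := by
  obtain ⟨hβ0, hβ1⟩ := hβ
  set G : ℝ → ℝ := fun s => (β / (N + 1)) * ∑ l ∈ Finset.Icc k N, (l.choose k : ℝ) * s ^ (N - l)
      - (N.choose k : ℝ) with hG
  have hβN : 0 < β / (N + 1) := div_pos hβ0 (by positivity)
  -- key identity
  have key : ∀ t : ℝ, t ≠ 0 →
      (β / (N + 1)) * ∑ l ∈ Finset.Icc k N, (l.choose k : ℝ) * t ^ (l - k)
        - (N.choose k : ℝ) * t ^ (N - k) = t ^ (N - k) * G (1 / t) := by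
    intro t ht
    simp only [hG]
    have hS : t ^ (N - k) * ∑ l ∈ Finset.Icc k N, (l.choose k : ℝ) * (1 / t) ^ (N - l)
        = ∑ l ∈ Finset.Icc k N, (l.choose k : ℝ) * t ^ (l - k) := by
      rw [Finset.mul_sum]
      apply Finset.sum_congr rfl
      intro l hl
      obtain ⟨hkl, hlN⟩ := Finset.mem_Icc.mp hl
      rw [one_div, inv_pow,
        show t ^ (N - k) * ((l.choose k : ℝ) * (t ^ (N - l))⁻¹)
          = (l.choose k : ℝ) * (t ^ (N - k) * (t ^ (N - l))⁻¹) by ring,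
        ← pow_sub₀ t ht (by omega : N - l ≤ N - k),
        show N - k - (N - l) = l - k by omega]
    rw [mul_sub, ← mul_assoc, mul_comm (t ^ (N - k)) (β / (↑N + 1)), mul_assoc, hS,
      mul_comm (t ^ (N - k)) ((N.choose k : ℝ))]
  -- strict monotonicity on [1,∞)
  have hGmono : StrictMonoOn G (Set.Ici (1 : ℝ)) := by
    intro s1 hs1 s2 hs2 h12
    have h0 : (0 : ℝ) ≤ s1 := le_trans zero_le_one hs1
    simp only [hG]
    apply sub_lt_sub_right
    apply mul_lt_mul_of_pos_left _ hβN
    apply Finset.sum_lt_sum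
    · intro l hl
      exact mul_le_mul_of_nonneg_left (pow_le_pow_left₀ h0 h12.le _) (by positivity)
    · refine ⟨k, Finset.mem_Icc.mpr ⟨le_refl k, hk.le⟩, ?_⟩
      have hp : s1 ^ (N - k) < s2 ^ (N - k) := pow_lt_pow_left₀ h12 h0 (by omega)
      simpa [Nat.choose_self] using hp
  -- G 1 < 0
  have hchoose : (0 : ℝ) < (N.choose k : ℝ) := by
    exact_mod_cast Nat.choose_pos hk.le
  have hG1 : G 1 < 0 := by
    have hsum : ∑ l ∈ Finset.Icc k N, (l.choose k : ℝ) * (1 : ℝ) ^ (N - l)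
        = ((N + 1).choose (k + 1) : ℝ) := by
      push_cast [← Nat.sum_Icc_choose]
      simp
    have hid : (N + 1) * N.choose k = (N + 1).choose (k + 1) * (k + 1) :=
      Nat.add_one_mul_choose_eq N k
    have hidR : ((N : ℝ) + 1) * (N.choose k : ℝ) = ((N + 1).choose (k + 1) : ℝ) * ((k : ℝ) + 1) := by
      exact_mod_cast hid
    have hcp : (0 : ℝ) < ((N + 1).choose (k + 1) : ℝ) := by
      exact_mod_cast Nat.choose_pos (by omega : k + 1 ≤ N + 1)
    simp only [hG, hsum]
    rw [sub_neg, div_mul_eq_mul_div, div_lt_iff₀ (by positivity : (0 : ℝ) < (N : ℝ) + 1)]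
    calc β * ((N + 1).choose (k + 1) : ℝ) < 1 * ((N + 1).choose (k + 1) : ℝ) := by
          exact mul_lt_mul_of_pos_right hβ1 hcp
      _ ≤ ((N + 1).choose (k + 1) : ℝ) * ((k : ℝ) + 1) := by nlinarith
      _ = (N.choose k : ℝ) * ((N : ℝ) + 1) := by linarith [hidR]
  -- continuity
  have hGcont : Continuous G := by
    apply Continuous.sub _ continuous_const
    exact continuous_const.mul (continuous_finset_sum _ fun l _ => continuous_const.mul (continuous_pow _))
  -- a point where G is nonnegative
  set s0 : ℝ := max 1 ((N + 1) * (N.choose k : ℝ) / β) with hs0def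
  have hs01 : (1 : ℝ) ≤ s0 := le_max_left _ _
  have hs00 : (0 : ℝ) ≤ s0 := le_trans zero_le_one hs01
  have hGs0 : 0 ≤ G s0 := by
    have hterm : s0 ^ (N - k) ≤ ∑ l ∈ Finset.Icc k N, (l.choose k : ℝ) * s0 ^ (N - l) := by
      have := Finset.single_le_sum (f := fun l => (l.choose k : ℝ) * s0 ^ (N - l))
        (fun l _ => by positivity) (Finset.mem_Icc.mpr ⟨le_refl k, hk.le⟩)
      simpa [Nat.choose_self] using this
    have hpow : (N + 1) * (N.choose k : ℝ) / β ≤ s0 ^ (N - k) :=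
      le_trans (le_max_right _ _) (le_self_pow₀ hs01 (by omega))
    have h1 : (N.choose k : ℝ) ≤ (β / (N + 1)) * s0 ^ (N - k) := by
      rw [div_mul_eq_mul_div, le_div_iff₀ (by positivity : (0 : ℝ) < (N : ℝ) + 1)]
      calc (N.choose k : ℝ) * ((N : ℝ) + 1) = β * ((N + 1) * (N.choose k : ℝ) / β) := by
            field_simp
        _ ≤ β * s0 ^ (N - k) := mul_le_mul_of_nonneg_left hpow hβ0.le
    simp only [hG, sub_nonneg]
    calc (N.choose k : ℝ) ≤ (β / (N + 1)) * s0 ^ (N - k) := h1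
      _ ≤ (β / (N + 1)) * ∑ l ∈ Finset.Icc k N, (l.choose k : ℝ) * s0 ^ (N - l) :=
          mul_le_mul_of_nonneg_left hterm hβN.le
  -- IVT
  obtain ⟨c, hcmem, hGc⟩ := intermediate_value_Icc hs01 hGcont.continuousOn ⟨hG1.le, hGs0⟩
  have hc1 : 1 < c := by
    rcases lt_or_eq_of_le hcmem.1 with h | h
    · exact h
    · exfalso; rw [← h] at hGc; exact absurd hGc hG1.ne
  have hc0 : 0 < c := lt_trans zero_lt_one hc1
  refine ⟨1 / c, ⟨⟨by positivity, by rw [div_lt_one hc0]; exact hc1⟩, ?_⟩, ?_⟩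
  · rw [key (1 / c) (by positivity), one_div_one_div, hGc, mul_zero]
  · rintro t ⟨⟨ht0, ht1⟩, hft⟩
    rw [key t ht0.ne'] at hft
    have htk : t ^ (N - k) ≠ 0 := pow_ne_zero _ ht0.ne'
    have hGt : G (1 / t) = 0 := by
      rcases mul_eq_zero.mp hft with h | h
      · exact absurd h htk
      · exact h
    have h1t : (1 : ℝ) ≤ 1 / t := le_of_lt (by rw [lt_div_iff₀ ht0]; linarith)
    have : 1 / t = c := hGmono.injOn h1t (Set.mem_Ici.mpr hcmem.1) (hGt.trans hGc.symm)
    rw [← this, one_div_one_div]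
end

section
/- In the demand-response game with M players, strategy x^j ∈ ℝ^T_{≥0}, aggregate σ(x) = Σ_{j=1}^M x^j, and costs J^j(x) = Σ_{t=1}^T α_t σ_t(x) x^j_t with α_t > 0, the pseudo-gradient operator F(x) stacking ∇_{x^j} J^j(x) = A σ(x) + A x^j (where A = diag(α_1, …, α_T)) is strongly monotone on ℝ^{MT}. -/
open RealInnerProductSpace

/-- Strong monotonicity of the pseudo-gradient operator of the demand-response
aggregative game: player j has gradient `t ↦ α t * σ(x) t + α t * x j t`. -/
theorem demand_response_operator_strongly_monotone {M T : ℕ}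
    (α : Fin T → ℝ) (hα : ∀ t, 0 < α t)
    (F : (Fin M → EuclideanSpace ℝ (Fin T)) → Fin M → EuclideanSpace ℝ (Fin T))
    (hF : ∀ x j t, F x j t = α t * (∑ i, x i t) + α t * x j t) :
    ∃ c > 0, ∀ x y : Fin M → EuclideanSpace ℝ (Fin T),
      c * ∑ j, ‖x j - y j‖ ^ 2 ≤ ∑ j, ⟪F x j - F y j, x j - y j⟫ := by
  obtain ⟨c, hc0, hc⟩ : ∃ c > 0, ∀ t : Fin T, c ≤ α t := by
    rcases Nat.eq_zero_or_pos T with h | h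
    · exact ⟨1, one_pos, fun t => absurd t.2 (by omega)⟩
    · obtain ⟨t0, _, ht0⟩ := Finset.exists_min_image Finset.univ α
        ⟨⟨0, h⟩, Finset.mem_univ _⟩
      exact ⟨α t0, hα t0, fun t => ht0 t (Finset.mem_univ t)⟩
  refine ⟨c, hc0, fun x y => ?_⟩
  have hnorm : ∀ j, ‖x j - y j‖ ^ 2 = ∑ t, (x j t - y j t) ^ 2 := by
    intro j
    rw [EuclideanSpace.norm_eq, Real.sq_sqrt (by positivity)]
    simp [sq_abs]
  have hin : ∀ j, ⟪F x j - F y j, x j - y j⟫ =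
      ∑ t, α t * ((∑ i, (x i t - y i t)) + (x j t - y j t)) * (x j t - y j t) := by
    intro j
    rw [PiLp.inner_apply]
    refine Finset.sum_congr rfl fun t _ => ?_
    have h1 : (F x j - F y j) t = F x j t - F y j t := rfl
    have h2 : (x j - y j) t = x j t - y j t := rfl
    rw [RCLike.inner_apply, starRingEnd_apply, star_trivial, h1, h2, hF, hF,
      show (∑ i, (x i t - y i t)) = (∑ i, x i t) - ∑ i, y i t from Finset.sum_sub_distrib (fun i => x i t) (fun i => y i t)]
    ring
  calc c * ∑ j, ‖x j - y j‖ ^ 2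
      = ∑ t, c * ∑ j, (x j t - y j t) ^ 2 := by
        simp only [hnorm, Finset.mul_sum]
        rw [Finset.sum_comm]
    _ ≤ ∑ t, α t * ((∑ j, (x j t - y j t)) ^ 2 + ∑ j, (x j t - y j t) ^ 2) := by
        refine Finset.sum_le_sum fun t _ => ?_
        have h1 : (0:ℝ) ≤ (∑ j, (x j t - y j t)) ^ 2 := sq_nonneg _
        have h2 : (0:ℝ) ≤ ∑ j, (x j t - y j t) ^ 2 :=
          Finset.sum_nonneg fun j _ => sq_nonneg _
        nlinarith [hc t, hα t]
    _ = ∑ j, ⟪F x j - F y j, x j - y j⟫ := by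
        simp only [hin]
        rw [Finset.sum_comm]
        refine Finset.sum_congr rfl fun t _ => ?_
        have h3 : ∀ j : Fin M, α t * ((∑ i, (x i t - y i t)) + (x j t - y j t)) * (x j t - y j t)
            = α t * ((∑ i, (x i t - y i t)) * (x j t - y j t))
              + α t * (x j t - y j t) ^ 2 := fun j => by ring
        simp only [h3, Finset.sum_add_distrib, ← Finset.mul_sum]
        ring
end
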